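/- For every finite group G there exists N such that the combinatorial Burnside group BC_n(G) is the zero group for all n > N. -/

import Mathlib

open scoped Classical

noncomputable section

namespace CBG

/-- The character group `A^∨ = Hom(A, ℂ^×)` of a group `A`, written additively. -/
abbrev Ch (A : Type*) [Group A] : Type _ := Additive (A →* ℂˣ)

/-- A multiset of characters generates the character group. -/
def gens {A : Type*} [Group A] (β : Multiset (Ch A)) : Prop :=
  AddSubgroup.closure {b | b ∈ β} = ⊤

variable (G : Type*) [Group G]

/-- Generating symbols `(H, Y, β)` of the combinatorial symbols group `SC_n(G)`:
`H ⊆ G` abelian, `H ⊆ Y ⊆ Z_G(H)`, and `β` a multiset (= sequence modulo the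
reordering relation (O)) of nontrivial characters of `H`, of length `1 ≤ r ≤ n`,
generating `H^∨`. -/
structure Symbol (n : ℕ) where
  H : Subgroup G
  Y : Subgroup G
  habelian : IsMulCommutative H
  hHY : H ≤ Y
  hYC : Y ≤ Subgroup.centralizer (H : Set G)
  β : Multiset (Ch H)
  hcard₁ : 1 ≤ Multiset.card β
  hcard₂ : Multiset.card β ≤ n
  hne : ∀ b ∈ β, b ≠ 0
  hgen : gens β

/-- The combinatorial symbols group `SC_n(G)`: the free `ℤ`-module on the symbols. -/
abbrev SC (n : ℕ) : Type _ := Symbol G n →₀ ℤ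

/-- The symbol `(H, Y, β)` as an element of `SC_n(G)`, with the convention that
an invalid symbol (in particular, one whose character sequence contains the
trivial character) is `0`. -/
def mkSC (n : ℕ) (H Y : Subgroup G) (β : Multiset (Ch H)) : SC G n :=
  if h : IsMulCommutative H ∧ H ≤ Y ∧ Y ≤ Subgroup.centralizer (H : Set G) ∧
      1 ≤ Multiset.card β ∧ Multiset.card β ≤ n ∧ (∀ b ∈ β, b ≠ 0) ∧ gens β then
    Finsupp.single ⟨H, Y, h.1, h.2.1, h.2.2.1, β, h.2.2.2.1, h.2.2.2.2.1,
      h.2.2.2.2.2.1, h.2.2.2.2.2.2⟩ 1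
  else 0

/-- Restriction of a character to a smaller subgroup. -/
def resCh {H K : Subgroup G} (h : K ≤ H) (b : Ch H) : Ch K :=
  Additive.ofMul ((Additive.toMul b).comp (Subgroup.inclusion h))

/-- The conjugate subgroup `gHg⁻¹`. -/
def conjSub (g : G) (H : Subgroup G) : Subgroup G :=
  Subgroup.map (MulAut.conj g : G ≃* G) H

/-- Transport of a character of `H` to a character of `K = gHg⁻¹` along conjugation by `g`. -/
def conjChTo {H K : Subgroup G} (g : G) (hK : conjSub G g H = K) (b : Ch H) : Ch K :=
  Additive.ofMul ((Additive.toMul b).comp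
    (((MulEquiv.subgroupMap (MulAut.conj g : G ≃* G) H).trans
      (MulEquiv.subgroupCongr hK)).symm.toMonoidHom))

/-- Relation (C): conjugation. -/
def relC (n : ℕ) : Set (SC G n) :=
  {x | ∃ (s : Symbol G n) (g : G),
    x = Finsupp.single s 1 -
        mkSC G n (conjSub G g s.H) (conjSub G g s.Y) (s.β.map (conjChTo G g rfl))}

/-- Relation (V): vanishing. -/
def relV (n : ℕ) : Set (SC G n) :=
  {x | ∃ s : Symbol G n,
    (s.H = ⊥ ∨ ∃ (b₁ b₂ : Ch s.H) (rest : Multiset (Ch s.H)),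
      s.β = b₁ ::ₘ b₂ ::ₘ rest ∧ b₁ + b₂ = 0) ∧
    x = Finsupp.single s 1}

/-- Relation (B2): blowup. -/
def relB2 (n : ℕ) : Set (SC G n) :=
  {x | ∃ (s : Symbol G n) (b₁ b₂ : Ch s.H) (rest : Multiset (Ch s.H)),
    s.β = b₁ ::ₘ b₂ ::ₘ rest ∧
    ((b₁ = b₂ ∧ x = Finsupp.single s 1 - mkSC G n s.H s.Y (b₂ ::ₘ rest)) ∨
     (b₁ ≠ b₂ ∧ (∃ b ∈ s.β, b ∈ AddSubgroup.zmultiples (b₁ - b₂)) ∧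
        x = Finsupp.single s 1 - mkSC G n s.H s.Y ((b₁ - b₂) ::ₘ b₂ ::ₘ rest)
            - mkSC G n s.H s.Y (b₁ ::ₘ (b₂ - b₁) ::ₘ rest)) ∨
     (b₁ ≠ b₂ ∧ ¬(∃ b ∈ s.β, b ∈ AddSubgroup.zmultiples (b₁ - b₂)) ∧
        x = Finsupp.single s 1 - mkSC G n s.H s.Y ((b₁ - b₂) ::ₘ b₂ ::ₘ rest)
            - mkSC G n s.H s.Y (b₁ ::ₘ (b₂ - b₁) ::ₘ rest)
            - mkSC G n (Subgroup.map s.H.subtype (MonoidHom.ker (Additive.toMul (b₁ - b₂))))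
                s.Y (s.β.map (resCh G (Subgroup.map_subtype_le _)))))}

/-- Relation (B2'): modified blowup. -/
def relB2' (n : ℕ) : Set (SC G n) :=
  {x | ∃ (s : Symbol G n) (b₁ b₂ : Ch s.H) (rest : Multiset (Ch s.H)),
    s.β = b₁ ::ₘ b₂ ::ₘ rest ∧
    ((b₁ = b₂ ∧ x = Finsupp.single s 1 - mkSC G n s.H s.Y (b₂ ::ₘ rest)) ∨
     (b₁ ≠ b₂ ∧
        x = Finsupp.single s 1 - mkSC G n s.H s.Y ((b₁ - b₂) ::ₘ b₂ ::ₘ rest)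
            - mkSC G n s.H s.Y (b₁ ::ₘ (b₂ - b₁) ::ₘ rest)))}

/-- The combinatorial Burnside group `BC_n(G)`. -/
abbrev BC (n : ℕ) : Type _ :=
  SC G n ⧸ Submodule.span ℤ (relC G n ∪ relV G n ∪ relB2 G n)

/-- The group `BC'_n(G)`. -/
abbrev BC' (n : ℕ) : Type _ :=
  SC G n ⧸ Submodule.span ℤ (relC G n ∪ relV G n ∪ relB2' G n)

/-- Projection `SC_n(G) → BC_n(G)`. -/
def BCmk (n : ℕ) : SC G n →ₗ[ℤ] BC G n :=
  Submodule.mkQ _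

/-- Projection `SC_n(G) → BC'_n(G)`. -/
def BC'mk (n : ℕ) : SC G n →ₗ[ℤ] BC' G n :=
  Submodule.mkQ _

end CBG

open CBG

namespace CBGAux

open CBG Multiset

variable {G : Type*} [Group G]

/-- The span of the relations defining `BC_n(G)`. -/
def SP (G : Type*) [Group G] (n : ℕ) : Submodule ℤ (SC G n) :=
  Submodule.span ℤ (relC G n ∪ relV G n ∪ relB2 G n)

lemma mem_SP_of_relV {n : ℕ} {x : SC G n} (h : x ∈ relV G n) : x ∈ SP G n :=
  Submodule.subset_span (Set.mem_union_left _ (Set.mem_union_right _ h))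

lemma mem_SP_of_relB2 {n : ℕ} {x : SC G n} (h : x ∈ relB2 G n) : x ∈ SP G n :=
  Submodule.subset_span (Set.mem_union_right _ h)

/-- Validity conditions of a symbol, matching the condition in `mkSC`. -/
def Valid (n : ℕ) (H Y : Subgroup G) (β : Multiset (Ch H)) : Prop :=
  IsMulCommutative H ∧ H ≤ Y ∧ Y ≤ Subgroup.centralizer (H : Set G) ∧
    1 ≤ Multiset.card β ∧ Multiset.card β ≤ n ∧ (∀ b ∈ β, b ≠ 0) ∧ gens β

def Valid.symbol {n : ℕ} {H Y : Subgroup G} {β : Multiset (Ch H)}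
    (h : Valid n H Y β) : Symbol G n :=
  ⟨H, Y, h.1, h.2.1, h.2.2.1, β, h.2.2.2.1, h.2.2.2.2.1, h.2.2.2.2.2.1, h.2.2.2.2.2.2⟩

lemma mkSC_valid {n : ℕ} {H Y : Subgroup G} {β : Multiset (Ch H)} (h : Valid n H Y β) :
    mkSC G n H Y β = Finsupp.single h.symbol 1 := by
  unfold mkSC
  exact dif_pos h

lemma mkSC_invalid {n : ℕ} {H Y : Subgroup G} {β : Multiset (Ch H)} (h : ¬ Valid n H Y β) :
    mkSC G n H Y β = 0 := by
  unfold mkSC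
  exact dif_neg h

lemma mkSC_eq_single {n : ℕ} (s : Symbol G n) :
    mkSC G n s.H s.Y s.β = Finsupp.single s 1 := by
  obtain ⟨H, Y, h1, h2, h3, β, c1, c2, hne, hgen⟩ := s
  exact mkSC_valid ⟨h1, h2, h3, c1, c2, hne, hgen⟩

lemma single_mem_SP_of_pair {n : ℕ} (s : Symbol G n) (b₁ b₂ : Ch s.H)
    (rest : Multiset (Ch s.H)) (hβ : s.β = b₁ ::ₘ b₂ ::ₘ rest) (hsum : b₁ + b₂ = 0) :
    Finsupp.single s 1 ∈ SP G n :=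
  mem_SP_of_relV ⟨s, Or.inr ⟨b₁, b₂, rest, hβ, hsum⟩, rfl⟩

lemma contract_mem {n : ℕ} (s : Symbol G n) (b : Ch s.H) (rest : Multiset (Ch s.H))
    (hβ : s.β = b ::ₘ b ::ₘ rest) :
    Finsupp.single s 1 - mkSC G n s.H s.Y (b ::ₘ rest) ∈ SP G n :=
  mem_SP_of_relB2 ⟨s, b, b, rest, hβ, Or.inl ⟨rfl, rfl⟩⟩

lemma blow_mem {n : ℕ} (s : Symbol G n) (b₁ b₂ : Ch s.H) (rest : Multiset (Ch s.H))
    (hβ : s.β = b₁ ::ₘ b₂ ::ₘ rest) (hne : b₁ ≠ b₂)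
    (hker : mkSC G n (Subgroup.map s.H.subtype (MonoidHom.ker (Additive.toMul (b₁ - b₂))))
        s.Y (s.β.map (resCh G (Subgroup.map_subtype_le _))) ∈ SP G n) :
    Finsupp.single s 1 - mkSC G n s.H s.Y ((b₁ - b₂) ::ₘ b₂ ::ₘ rest)
      - mkSC G n s.H s.Y (b₁ ::ₘ (b₂ - b₁) ::ₘ rest) ∈ SP G n := by
  by_cases hc : ∃ b ∈ s.β, b ∈ AddSubgroup.zmultiples (b₁ - b₂)
  · exact mem_SP_of_relB2 ⟨s, b₁, b₂, rest, hβ, Or.inr (Or.inl ⟨hne, hc, rfl⟩)⟩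
  · have h3 := mem_SP_of_relB2 (G := G) (n := n)
      ⟨s, b₁, b₂, rest, hβ, Or.inr (Or.inr ⟨hne, hc, rfl⟩)⟩
    have h4 := (SP G n).add_mem h3 hker
    convert h4 using 1
    abel

lemma gens_of_subset {A : Type*} [Group A] {β γ : Multiset (Ch A)} (h : gens β)
    (hsub : ∀ b ∈ β, b ∈ γ) : gens γ := by
  unfold gens at h ⊢
  rw [eq_top_iff, ← h]
  exact (AddSubgroup.closure_le _).mpr fun b hb => AddSubgroup.subset_closure (hsub b hb)

lemma pairMk_mem {n : ℕ} (H Y : Subgroup G) (x y : Ch H) (δ : Multiset (Ch H))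
    (hxy : x + y = 0) : mkSC G n H Y (x ::ₘ y ::ₘ δ) ∈ SP G n := by
  by_cases hv : Valid n H Y (x ::ₘ y ::ₘ δ)
  · rw [mkSC_valid hv]
    exact single_mem_SP_of_pair hv.symbol x y δ rfl hxy
  · rw [mkSC_invalid hv]; exact zero_mem _

lemma finite_Ch (A : Type*) [Group A] [Finite A] : Finite (Ch A) := by
  haveI : NeZero (Nat.card A) := ⟨Nat.card_pos.ne'⟩
  have hinj : Function.Injective
      (fun f : A →* ℂˣ => fun a : A =>
        (⟨f a, by
          rw [mem_rootsOfUnity, ← map_pow, pow_card_eq_one', map_one]⟩ :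
          rootsOfUnity (Nat.card A) ℂ)) := by
    intro f g h
    apply MonoidHom.ext
    intro a
    have h3 : f a = g a := Subtype.ext_iff.mp (congrFun h a)
    exact h3
  have : Finite (A →* ℂˣ) := Finite.of_injective _ hinj
  exact this

lemma kerMk_mem {n : ℕ} [Finite G] {H : Subgroup G} (Y' : Subgroup G)
    (IH : ∀ s' : Symbol G n, Nat.card s'.H < Nat.card H → Finsupp.single s' 1 ∈ SP G n)
    (c : Ch H) (hc : c ≠ 0)
    (β' : Multiset (Ch (Subgroup.map H.subtype (MonoidHom.ker (Additive.toMul c))))) :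
    mkSC G n (Subgroup.map H.subtype (MonoidHom.ker (Additive.toMul c))) Y' β' ∈ SP G n := by
  by_cases hv : Valid n (Subgroup.map H.subtype (MonoidHom.ker (Additive.toMul c))) Y' β'
  · rw [mkSC_valid hv]
    apply IH
    show Nat.card (Subgroup.map H.subtype (MonoidHom.ker (Additive.toMul c))) < Nat.card H
    have hne1 : Additive.toMul c ≠ 1 := by
      intro h
      apply hc
      have h2 : Additive.ofMul (Additive.toMul c) = Additive.ofMul 1 := by rw [h]
      simpa using h2
    obtain ⟨h₀, hh₀⟩ : ∃ h₀ : H, Additive.toMul c h₀ ≠ 1 := by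
      by_contra hcon
      push_neg at hcon
      exact hne1 (MonoidHom.ext fun h => hcon h)
    have hss : ((Subgroup.map H.subtype (MonoidHom.ker (Additive.toMul c))) : Set G)
        ⊂ (H : Set G) := by
      constructor
      · exact Subgroup.map_subtype_le _
      · intro hsub
        have hmem : (h₀ : G) ∈ Subgroup.map H.subtype (MonoidHom.ker (Additive.toMul c)) :=
          hsub h₀.2
        obtain ⟨y, hy, hy2⟩ := hmem
        have hyh : y = h₀ := Subtype.ext hy2
        rw [hyh] at hy
        exact hh₀ hy
    have hlt := Set.ncard_lt_ncard hss (Set.toFinite _)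
    rw [← Nat.card_coe_set_eq, ← Nat.card_coe_set_eq] at hlt
    exact hlt
  · rw [mkSC_invalid hv]; exact zero_mem _

lemma lemP {n : ℕ} [Finite G] {H Y : Subgroup G}
    (IH : ∀ s' : Symbol G n, Nat.card s'.H < Nat.card H → Finsupp.single s' 1 ∈ SP G n) :
    ∀ k : ℕ, 1 ≤ k → ∀ (a : Ch H) (δ : Multiset (Ch H)),
      Multiset.card δ + 2 + k ≤ n →
      mkSC G n H Y (a ::ₘ (-(k • a)) ::ₘ δ) ∈ SP G n := by
  intro k
  induction k with
  | zero => intro h; exact absurd h (by omega)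
  | succ k IHk =>
    intro _ a δ hsize
    by_cases hka : k • a = 0
    · apply pairMk_mem
      have e2 : (k + 1) • a = k • a + a := succ_nsmul a k
      rw [e2, hka]
      abel
    · have hk1 : 1 ≤ k := by
        rcases Nat.eq_zero_or_pos k with h | h
        · exact absurd (by rw [h, zero_nsmul]) hka
        · exact h
      by_cases hv : Valid n H Y (a ::ₘ (-((k + 1) • a)) ::ₘ δ)
      swap
      · rw [mkSC_invalid hv]; exact zero_mem _
      obtain ⟨hcom, hHY, hYC, hc1, hc2, hne0, hgen⟩ := hv
      have ha0 : a ≠ 0 := hne0 a (Multiset.mem_cons_self _ _)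
      have hb₂0 : -((k + 1) • a) ≠ 0 :=
        hne0 _ (Multiset.mem_cons_of_mem (Multiset.mem_cons_self _ _))
      have hδ0 : ∀ b ∈ δ, b ≠ 0 := fun b hb =>
        hne0 b (Multiset.mem_cons_of_mem (Multiset.mem_cons_of_mem hb))
      have es : (k + 1) • a = k • a + a := succ_nsmul a k
      have hb₁0 : -(k • a) ≠ 0 := by
        intro hh
        apply hka
        have e1 : k • a = -(-(k • a)) := by abel
        rw [hh] at e1
        exact e1.trans (by abel)
      -- Z := a ::ₘ -(k•a) ::ₘ -((k+1)•a) ::ₘ δ lies in SP by the inductive hypothesis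
      have hZmem : mkSC G n H Y (a ::ₘ (-(k • a)) ::ₘ ((-((k + 1) • a)) ::ₘ δ)) ∈ SP G n := by
        apply IHk hk1 a ((-((k + 1) • a)) ::ₘ δ)
        simp only [Multiset.card_cons]
        omega
      -- Z is a valid symbol
      have hvZ : Valid n H Y (a ::ₘ (-(k • a)) ::ₘ ((-((k + 1) • a)) ::ₘ δ)) := by
        refine ⟨hcom, hHY, hYC, ?_, ?_, ?_, ?_⟩
        · simp [Multiset.card_cons]
        · simp only [Multiset.card_cons]
          omega
        · intro b hb
          simp only [Multiset.mem_cons] at hb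
          rcases hb with h | h | h | h
          · rw [h]; exact ha0
          · rw [h]; exact hb₁0
          · rw [h]; exact hb₂0
          · exact hδ0 b h
        · apply gens_of_subset hgen
          intro b hb
          simp only [Multiset.mem_cons] at hb ⊢
          tauto
      have hβZ : hvZ.symbol.β =
          (-(k • a)) ::ₘ (-((k + 1) • a)) ::ₘ (a ::ₘ δ) := by
        show a ::ₘ (-(k • a)) ::ₘ ((-((k + 1) • a)) ::ₘ δ) = _
        rw [Multiset.cons_swap a (-(k • a))]
        congr 1
        rw [Multiset.cons_swap a (-((k + 1) • a))]
      have hd12 : -(k • a) - -((k + 1) • a) = a := by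
        rw [es]; abel
      have hd21 : -((k + 1) • a) - -(k • a) = -a := by
        rw [es]; abel
      have hne12 : -(k • a) ≠ -((k + 1) • a) := by
        intro h
        apply ha0
        have h2 := hd12
        rw [h] at h2
        exact h2.symm.trans (by abel)
      have hker : mkSC G n
          (Subgroup.map hvZ.symbol.H.subtype
            (MonoidHom.ker (Additive.toMul (-(k • a) - -((k + 1) • a)))))
          hvZ.symbol.Y
          (hvZ.symbol.β.map (resCh G (Subgroup.map_subtype_le _))) ∈ SP G n := by
        apply kerMk_mem (H := H) hvZ.symbol.Y IH
        rw [hd12]; exact ha0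
      have hblow := blow_mem hvZ.symbol (-(k • a)) (-((k + 1) • a)) (a ::ₘ δ) hβZ hne12 hker
      have hblow' : Finsupp.single hvZ.symbol 1
          - mkSC G n H Y ((-(k • a) - -((k + 1) • a)) ::ₘ (-((k + 1) • a)) ::ₘ (a ::ₘ δ))
          - mkSC G n H Y ((-(k • a)) ::ₘ (-((k + 1) • a) - -(k • a)) ::ₘ (a ::ₘ δ)) ∈ SP G n :=
        hblow
      rw [hd12, hd21] at hblow'
      -- the second blowup term contains an opposite pair
      have hB : mkSC G n H Y ((-(k • a)) ::ₘ (-a) ::ₘ (a ::ₘ δ)) ∈ SP G n := by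
        rw [show (-(k • a)) ::ₘ (-a) ::ₘ (a ::ₘ δ) = (-a) ::ₘ a ::ₘ ((-(k • a)) ::ₘ δ) from by
          rw [Multiset.cons_swap (-(k • a)) (-a)]
          congr 1
          rw [Multiset.cons_swap (-(k • a)) a]]
        exact pairMk_mem H Y (-a) a _ (neg_add_cancel a)
      have hsZmem : Finsupp.single hvZ.symbol 1 ∈ SP G n := by
        rw [← mkSC_valid hvZ]
        exact hZmem
      -- hence the first blowup term is in SP
      have hA : mkSC G n H Y (a ::ₘ (-((k + 1) • a)) ::ₘ (a ::ₘ δ)) ∈ SP G n := by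
        have h6 := (SP G n).sub_mem ((SP G n).sub_mem hsZmem hB) hblow'
        convert h6 using 1
        abel
      rw [show a ::ₘ (-((k + 1) • a)) ::ₘ (a ::ₘ δ) = a ::ₘ a ::ₘ ((-((k + 1) • a)) ::ₘ δ) from by
        congr 1
        rw [Multiset.cons_swap (-((k + 1) • a)) a]] at hA
      -- contract the repeated entry
      have hvA : Valid n H Y (a ::ₘ a ::ₘ ((-((k + 1) • a)) ::ₘ δ)) := by
        refine ⟨hcom, hHY, hYC, ?_, ?_, ?_, ?_⟩
        · simp [Multiset.card_cons]
        · simp only [Multiset.card_cons]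
          omega
        · intro b hb
          simp only [Multiset.mem_cons] at hb
          rcases hb with h | h | h | h
          · rw [h]; exact ha0
          · rw [h]; exact ha0
          · rw [h]; exact hb₂0
          · exact hδ0 b h
        · apply gens_of_subset hgen
          intro b hb
          simp only [Multiset.mem_cons] at hb ⊢
          tauto
      have hAs : Finsupp.single hvA.symbol 1 ∈ SP G n := by
        rw [← mkSC_valid hvA]; exact hA
      have hcontr := contract_mem hvA.symbol a ((-((k + 1) • a)) ::ₘ δ) rfl
      have h7 := (SP G n).sub_mem hAs hcontr
      rw [sub_sub_cancel] at h7
      exact h7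

lemma main_single {n : ℕ} [Finite G] (B : ℕ)
    (hB : ∀ K : Subgroup G, Nat.card (Ch K) ≤ B)
    (hn : 2 * B + 2 ≤ n) :
    ∀ s : Symbol G n, Finsupp.single s 1 ∈ SP G n := by
  suffices h : ∀ m : ℕ, ∀ s : Symbol G n,
      Nat.card s.H * (n + 1) + Multiset.card s.β ≤ m → Finsupp.single s 1 ∈ SP G n by
    intro s; exact h _ s le_rfl
  intro m
  induction m with
  | zero =>
    intro s hm
    exfalso
    have h1 : 0 < Nat.card s.H := Nat.card_pos
    have h2 : 0 < Nat.card s.H * (n + 1) := Nat.mul_pos h1 (Nat.succ_pos n)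
    omega
  | succ m IHm =>
    intro s hm
    have IH : ∀ s' : Symbol G n, Nat.card s'.H < Nat.card s.H →
        Finsupp.single s' 1 ∈ SP G n := by
      intro s' hlt
      apply IHm
      have key : (Nat.card s'.H + 1) * (n + 1) ≤ Nat.card s.H * (n + 1) :=
        Nat.mul_le_mul_right _ hlt
      rw [add_mul, one_mul] at key
      have h2 : Multiset.card s'.β ≤ n := s'.hcard₂
      have h0 : 1 ≤ Multiset.card s.β := s.hcard₁
      linarith
    by_cases hd : s.β.Nodup
    · -- no duplicate entries: pad and use `lemP`
      haveI : Finite (Ch s.H) := finite_Ch _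
      haveI : Fintype (Ch s.H) := Fintype.ofFinite _
      have hβne : s.β ≠ 0 := by
        intro h
        have h1 := s.hcard₁
        rw [h] at h1
        simp at h1
      obtain ⟨x, hx⟩ := Multiset.exists_mem_of_ne_zero hβne
      obtain ⟨rest, hβ⟩ := Multiset.exists_cons_of_mem hx
      have hx0 : x ≠ 0 := s.hne x hx
      have hm'pos : 0 < addOrderOf x := addOrderOf_pos x
      have hm'ne1 : addOrderOf x ≠ 1 := fun h => hx0 (AddMonoid.addOrderOf_eq_one_iff.mp h)
      have hm'2 : 2 ≤ addOrderOf x := by omega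
      have hsm : -((addOrderOf x - 1) • x) = x := by
        have hsucc : ((addOrderOf x - 1) + 1) • x = (addOrderOf x - 1) • x + x :=
          succ_nsmul x _
        have heq : (addOrderOf x - 1) + 1 = addOrderOf x := by omega
        rw [heq] at hsucc
        have hordx : addOrderOf x • x = 0 := addOrderOf_nsmul_eq_zero x
        have hzero : (addOrderOf x - 1) • x + x = 0 := by rw [← hsucc]; exact hordx
        have e3 : -((addOrderOf x - 1) • x) = x - ((addOrderOf x - 1) • x + x) := by abel
        rw [hzero] at e3
        exact e3.trans (by abel)
      have hcard1 : Multiset.card s.β ≤ Nat.card (Ch s.H) := by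
        rw [Nat.card_eq_fintype_card]
        calc Multiset.card s.β = s.β.toFinset.card := (Multiset.toFinset_card_of_nodup hd).symm
          _ ≤ _ := Finset.card_le_univ _
      have hord : addOrderOf x ≤ Nat.card (Ch s.H) := by
        rw [Nat.card_eq_fintype_card]; exact addOrderOf_le_card_univ
      have hBB := hB s.H
      have hcr : Multiset.card s.β = Multiset.card rest + 1 := by rw [hβ]; simp
      have hsize : Multiset.card rest + 2 + (addOrderOf x - 1) ≤ n := by omega
      have hP := lemP (Y := s.Y) IH (addOrderOf x - 1) (by omega) x rest hsize
      rw [hsm] at hP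
      have hvP : Valid n s.H s.Y (x ::ₘ x ::ₘ rest) := by
        refine ⟨s.habelian, s.hHY, s.hYC, by simp, ?_, ?_, ?_⟩
        · simp only [Multiset.card_cons]
          omega
        · intro b hb
          simp only [Multiset.mem_cons] at hb
          rcases hb with h | h | h
          · rw [h]; exact hx0
          · rw [h]; exact hx0
          · exact s.hne b (by rw [hβ]; exact Multiset.mem_cons_of_mem h)
        · apply gens_of_subset s.hgen
          intro b hb
          rw [hβ] at hb
          simp only [Multiset.mem_cons] at hb ⊢
          tauto
      have hPs : Finsupp.single hvP.symbol 1 ∈ SP G n := by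
        rw [← mkSC_valid hvP]; exact hP
      have hcontr := contract_mem hvP.symbol x rest rfl
      have h7 := (SP G n).sub_mem hPs hcontr
      rw [sub_sub_cancel] at h7
      have h8 : mkSC G n s.H s.Y (x ::ₘ rest) ∈ SP G n := h7
      rw [← hβ, mkSC_eq_single] at h8
      exact h8
    · -- a duplicate entry: contract and use the size induction
      have hcnt : ∃ a : Ch s.H, 1 < Multiset.count a s.β := by
        by_contra hcon
        push_neg at hcon
        exact hd (Multiset.nodup_iff_count_le_one.mpr hcon)
      obtain ⟨x, hx2⟩ := hcnt
      have hle : Multiset.replicate 2 x ≤ s.β := Multiset.le_count_iff_replicate_le.mp hx2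
      obtain ⟨u, hu⟩ := Multiset.le_iff_exists_add.mp hle
      have hβ : s.β = x ::ₘ x ::ₘ u := by
        rw [hu]
        simp [Multiset.replicate_succ, Multiset.cons_add]
      have hcard : Multiset.card s.β = Multiset.card u + 2 := by rw [hβ]; simp
      have hvu : Valid n s.H s.Y (x ::ₘ u) := by
        refine ⟨s.habelian, s.hHY, s.hYC, by simp, ?_, ?_, ?_⟩
        · have h2 := s.hcard₂
          simp only [Multiset.card_cons]
          omega
        · intro b hb
          apply s.hne
          rw [hβ]
          simp only [Multiset.mem_cons] at hb ⊢
          tauto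
        · apply gens_of_subset s.hgen
          intro b hb
          rw [hβ] at hb
          simp only [Multiset.mem_cons] at hb ⊢
          tauto
      have hcontr := contract_mem s x u hβ
      have hmem : Finsupp.single hvu.symbol 1 ∈ SP G n := by
        apply IHm
        show Nat.card s.H * (n + 1) + Multiset.card (x ::ₘ u) ≤ m
        simp only [Multiset.card_cons]
        have : Multiset.card u + 1 + 1 ≤ Multiset.card s.β := by omega
        linarith
      rw [mkSC_valid hvu] at hcontr
      have h9 := (SP G n).add_mem hcontr hmem
      rw [sub_add_cancel] at h9
      exact h9

end CBGAux

/-- For every finite group `G` there exists `N` such that the combinatorial Burnside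
group `BC_n(G)` vanishes for all `n > N`. -/
theorem exists_bound_BC_eq_zero (G : Type*) [Group G] [Finite G] :
    ∃ N : ℕ, ∀ n : ℕ, n > N → ∀ x : BC G n, x = 0 := by
  haveI : Finite (Subgroup G) :=
    Finite.of_injective (fun H : Subgroup G => (H : Set G)) SetLike.coe_injective
  haveI : Fintype (Subgroup G) := Fintype.ofFinite _
  refine ⟨2 * (Finset.univ.sup fun K : Subgroup G => Nat.card (Ch K)) + 1, ?_⟩
  intro n hn x
  have hB : ∀ K : Subgroup G, Nat.card (Ch K) ≤
      Finset.univ.sup fun K : Subgroup G => Nat.card (Ch K) :=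
    fun K => Finset.le_sup (f := fun K : Subgroup G => Nat.card (Ch K)) (Finset.mem_univ K)
  have hn' : 2 * (Finset.univ.sup fun K : Subgroup G => Nat.card (Ch K)) + 2 ≤ n := hn
  have hall : ∀ y : SC G n, y ∈ CBGAux.SP G n := by
    intro y
    induction y using Finsupp.induction with
    | zero => exact zero_mem _
    | single_add a b f _ _ ih =>
      refine (CBGAux.SP G n).add_mem ?_ ih
      have h1 := CBGAux.main_single _ hB hn' a
      have h2 : Finsupp.single a b = b • Finsupp.single a (1 : ℤ) := by
        rw [Finsupp.smul_single, smul_eq_mul, mul_one]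
      rw [h2]
      exact Submodule.smul_mem _ b h1
  obtain ⟨y, rfl⟩ := Submodule.Quotient.mk_surjective _ x
  exact (Submodule.Quotient.mk_eq_zero _).mpr (hall y)
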